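/- Assume every hospital's preference is substitutable and let φ̄ be the doctor-optimal rule. Fix a doctor d and a preference P_d, let y be the contract with {y} = W_d(P_d, O^{φ̄}(P_d)) (the P_d-worst element of d's option set under truth-telling), assume the set {w ∈ 𝐗_d : {w} P_d {y}} is nonempty, and let x be its P_d-minimum. Then {x} P_d W_d(P_d, O^{φ̄}(P'_d)) for every preference P'_d ≠ P_d of doctor d. -/

import Mathlib

set_option linter.unusedSectionVars false

namespace Matching

open Finset

/-- A many-to-one matching market with contracts: each contract `x` involves exactly one
doctor `xD x` and one hospital `xH x`; each hospital `h` has a fixed antisymmetric,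
transitive and complete preference `prH h`, modelled as a linear order on sets of
contracts (only its comparisons between allocations of contracts involving `h` matter). -/
structure Market (D H X : Type*) where
  xD : X → D
  xH : X → H
  prH : H → LinearOrder (Finset X)

/-- A doctor's preference: an antisymmetric, transitive and complete preference, modelled
as a linear order on sets of contracts (only comparisons between `∅` and singletons of
contracts involving the doctor matter). -/
abbrev Pref (X : Type*) := LinearOrder (Finset X)

/-- A profile of doctors' preferences. -/
abbrev Profile (D X : Type*) := D → Pref X

variable {D H X : Type*}
variable [DecidableEq D] [DecidableEq H] [DecidableEq X] [Fintype D] [Fintype H] [Fintype X]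

/-- `Y_d` : the contracts in `Y` involving doctor `d`. -/
def docPart (M : Market D H X) (Y : Finset X) (d : D) : Finset X :=
  Y.filter fun x => M.xD x = d

/-- `Y_h` : the contracts in `Y` involving hospital `h`. -/
def hospPart (M : Market D H X) (Y : Finset X) (h : H) : Finset X :=
  Y.filter fun x => M.xH x = h

/-- An allocation: distinct contracts involve distinct doctors. -/
def IsAllocation (M : Market D H X) (Z : Finset X) : Prop :=
  ∀ x ∈ Z, ∀ y ∈ Z, M.xD x = M.xD y → x = y

/-- `A(Y)` : the allocations contained in `Y`. -/
def allocs (M : Market D H X) (Y : Finset X) : Finset (Finset X) :=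
  Y.powerset.filter fun Z => ∀ x ∈ Z, ∀ y ∈ Z, M.xD x = M.xD y → x = y

lemma empty_mem_allocs (M : Market D H X) (Y : Finset X) : ∅ ∈ allocs M Y := by
  simp [allocs]

/-- The best allocation contained in `Y` according to the linear order `pr`. -/
def bestAlloc (M : Market D H X) (pr : Pref X) (Y : Finset X) : Finset X :=
  @Finset.max' _ pr (allocs M Y) ⟨∅, empty_mem_allocs M Y⟩

/-- `C_h(Y)` : hospital `h`'s choice set from `Y` (the `≻_h`-maximum of `A(Y_h)`). -/
def Ch (M : Market D H X) (h : H) (Y : Finset X) : Finset X :=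
  bestAlloc M (M.prH h) (hospPart M Y h)

/-- `C_d(P_d, Y)` : doctor `d`'s choice set from `Y` (the `P_d`-maximum of `A(Y_d)`). -/
def Cd (M : Market D H X) (Pd : Pref X) (d : D) (Y : Finset X) : Finset X :=
  bestAlloc M Pd (docPart M Y d)

/-- `C_H(Y) = ∪_{h ∈ H} C_h(Y)`. -/
def CH (M : Market D H X) (Y : Finset X) : Finset X :=
  univ.biUnion fun h => Ch M h Y

/-- `C_D(Y) = ∪_{d ∈ D} C_d(Y)`. -/
def CD (M : Market D H X) (P : Profile D X) (Y : Finset X) : Finset X :=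
  univ.biUnion fun d => Cd M (P d) d Y

/-- Substitutability of hospital `h`'s preference: `x ∈ C_h(W)` and `x ∈ Y_h ⊆ W_h`
imply `x ∈ C_h(Y)`. -/
def Substitutable (M : Market D H X) (h : H) : Prop :=
  ∀ W Y : Finset X, hospPart M Y h ⊆ hospPart M W h →
    ∀ x ∈ hospPart M Y h, x ∈ Ch M h W → x ∈ Ch M h Y

/-- The sets `X^t` of still-available contracts in the doctor-proposing deferred
acceptance algorithm (0-based: index `t` corresponds to iteration `t+1`). -/
def DDAsets (M : Market D H X) (P : Profile D X) : ℕ → Finset X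
  | 0 => univ
  | t + 1 =>
      DDAsets M P t \ (CD M P (DDAsets M P t) \ CH M (CD M P (DDAsets M P t)))

/-- `O^t` : the offers made by the doctors at iteration `t` of D-DA (0-based). -/
def offers (M : Market D H X) (P : Profile D X) (t : ℕ) : Finset X :=
  CD M P (DDAsets M P t)

/-- `O_A^t = ∪_{k ≤ t} O^k` : the accumulated offers up to iteration `t` (0-based). -/
def accOffers (M : Market D H X) (P : Profile D X) (t : ℕ) : Finset X :=
  (Finset.range (t + 1)).biUnion fun k => offers M P k

/-- D-DA has stopped at iteration `t`: all offers are accepted. -/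
def DDAstopped (M : Market D H X) (P : Profile D X) (t : ℕ) : Prop :=
  CH M (offers M P t) = offers M P t

/-- The (0-based) last iteration of D-DA, i.e. `T - 1` where `T` is the number of
iterations of D-DA. -/
noncomputable def DDAlast (M : Market D H X) (P : Profile D X) : ℕ :=
  sInf {t | DDAstopped M P t}

/-- The output of D-DA (the algorithm provably stops by iteration `Fintype.card X`,
and once stopped the offer sets stay constant). -/
def DDAoutput (M : Market D H X) (P : Profile D X) : Finset X :=
  CH M (offers M P (Fintype.card X))

/-- The doctor-optimal rule `φ̄`, giving doctor `d`'s outcome `φ̄_d(P)` (an element of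
`A(𝐗_d)`, i.e. `∅` or a singleton). -/
def docOpt (M : Market D H X) (P : Profile D X) (d : D) : Finset X :=
  docPart M (DDAoutput M P) d

/-- The sets `X^t` of still-available contracts in the hospital-proposing deferred
acceptance algorithm (0-based). -/
def HDAsets (M : Market D H X) (P : Profile D X) : ℕ → Finset X
  | 0 => univ
  | t + 1 =>
      HDAsets M P t \ (CH M (HDAsets M P t) \ CD M P (CH M (HDAsets M P t)))

/-- The offers made by the hospitals at iteration `t` of H-DA (0-based). -/
def hOffers (M : Market D H X) (P : Profile D X) (t : ℕ) : Finset X :=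
  CH M (HDAsets M P t)

/-- The output of H-DA. -/
def HDAoutput (M : Market D H X) (P : Profile D X) : Finset X :=
  CD M P (hOffers M P (Fintype.card X))

/-- The hospital-optimal rule `φ̲`, giving doctor `d`'s outcome `φ̲_d(P)`. -/
def hospOpt (M : Market D H X) (P : Profile D X) (d : D) : Finset X :=
  docPart M (HDAoutput M P) d

/-- The option set `O^φ(P_d)` left open by `P_d` at the rule `φ`. -/
def optionSet (rule : Profile D X → D → Finset X) (d : D) (Pd : Pref X) :
    Set (Finset X) :=
  {S | ∃ P : Profile D X, P d = Pd ∧ S = rule P d}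

open scoped Classical in
/-- `W_d(pr, S)` : the `pr`-worst element of the (finite) set `S` of outcomes. -/
noncomputable def worstIn (pr : Pref X) (S : Set (Finset X)) : Finset X :=
  if h : S.Nonempty then
    @Finset.min' _ pr (Set.toFinite S).toFinset ((Set.Finite.toFinset_nonempty _).mpr h)
  else ∅

open scoped Classical in
/-- The `pr`-best element of the (finite) set `S` of outcomes. -/
noncomputable def bestIn (pr : Pref X) (S : Set (Finset X)) : Finset X :=
  if h : S.Nonempty then
    @Finset.max' _ pr (Set.toFinite S).toFinset ((Set.Finite.toFinset_nonempty _).mpr h)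
  else ∅

/-- `P'_d` is a manipulation of the rule at `P_d` : for some subprofile of the other
doctors, reporting `P'_d` gives a strictly `P_d`-better outcome than truth-telling. -/
def IsManip (rule : Profile D X → D → Finset X) (d : D) (Pd P'd : Pref X) : Prop :=
  ∃ P : Profile D X, P d = Pd ∧
    Pd.lt (rule P d) (rule (Function.update P d P'd) d)

/-- `P'_d` is an obvious manipulation of the rule at `P_d`. -/
def IsObviousManip (rule : Profile D X → D → Finset X) (d : D) (Pd P'd : Pref X) :
    Prop :=
  IsManip rule d Pd P'd ∧
    (Pd.lt (worstIn Pd (optionSet rule d Pd)) (worstIn Pd (optionSet rule d P'd)) ∨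
     Pd.lt (bestIn Pd (optionSet rule d Pd)) (bestIn Pd (optionSet rule d P'd)))

/-- A rule is not obviously manipulable (NOM). -/
def NOM (rule : Profile D X → D → Finset X) : Prop :=
  ∀ (d : D) (Pd P'd : Pref X), ¬ IsObviousManip rule d Pd P'd

/-- A rule is obviously manipulable (OM). -/
def OM (rule : Profile D X → D → Finset X) : Prop :=
  ∃ (d : D) (Pd P'd : Pref X), IsObviousManip rule d Pd P'd

/-- `Y` is a stable allocation at the profile `P` : it is an individually rational
allocation and admits no blocking contract. -/
def IsStable (M : Market D H X) (P : Profile D X) (Y : Finset X) : Prop :=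
  IsAllocation M Y ∧ CD M P Y = Y ∧ CH M Y = Y ∧
    ∀ x : X, x ∉ Y →
      ¬ (x ∈ Cd M (P (M.xD x)) (M.xD x) (insert x Y) ∧
         x ∈ Ch M (M.xH x) (insert x Y))

/-- `⌈kq⌉` where `k` is the number of stable allocations at `P`. -/
noncomputable def quantileIndex (M : Market D H X) (P : Profile D X) (q : ℝ) : ℕ :=
  ⌈(Set.ncard {Y : Finset X | IsStable M P Y} : ℝ) * q⌉₊

/-- `Z` is doctor `d`'s `⌈kq⌉`-th best outcome (according to `P d`) among the `k` stable
allocations at `P` : it is the outcome of some stable allocation, strictly fewer than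
`⌈kq⌉` stable allocations give `d` a strictly better outcome, and at least `⌈kq⌉` stable
allocations give `d` a weakly better outcome. -/
def IsQuantileOutcome (M : Market D H X) (P : Profile D X) (q : ℝ) (d : D)
    (Z : Finset X) : Prop :=
  (∃ Y : Finset X, IsStable M P Y ∧ docPart M Y d = Z) ∧
    Set.ncard {Y : Finset X | IsStable M P Y ∧ (P d).lt Z (docPart M Y d)} <
      quantileIndex M P q ∧
    quantileIndex M P q ≤
      Set.ncard {Y : Finset X | IsStable M P Y ∧ (P d).le Z (docPart M Y d)}

section Test
variable {D H X : Type*}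
variable [DecidableEq D] [DecidableEq H] [DecidableEq X] [Fintype D] [Fintype H] [Fintype X]
variable {M : Market D H X}

lemma pref_le_of_not_lt (pr : Pref X) {a b : Finset X} (h : ¬ pr.lt a b) : pr.le b a := by
  rcases pr.le_total b a with h' | h'
  · exact h'
  · by_cases hba : pr.le b a
    · exact hba
    · exact absurd ((pr.lt_iff_le_not_ge a b).mpr ⟨h', hba⟩) h

lemma pref_lt_of_le_of_lt (pr : Pref X) {a b c : Finset X} (h1 : pr.le a b) (h2 : pr.lt b c) :
    pr.lt a c := by
  rw [pr.lt_iff_le_not_ge] at h2 ⊢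
  exact ⟨pr.le_trans _ _ _ h1 h2.1, fun hc => h2.2 (pr.le_trans _ _ _ hc h1)⟩

lemma pref_lt_of_le_of_ne (pr : Pref X) {a b : Finset X} (h1 : pr.le a b) (h2 : a ≠ b) :
    pr.lt a b := by
  rw [pr.lt_iff_le_not_ge]
  exact ⟨h1, fun hba => h2 (pr.le_antisymm _ _ h1 hba)⟩

lemma pref_not_le_of_lt (pr : Pref X) {a b : Finset X} (h : pr.lt a b) : ¬ pr.le b a :=
  ((pr.lt_iff_le_not_ge a b).mp h).2

lemma mem_docPart {Y : Finset X} {d : D} {c : X} :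
    c ∈ docPart M Y d ↔ c ∈ Y ∧ M.xD c = d := by simp [docPart]

lemma mem_hospPart {Y : Finset X} {h : H} {c : X} :
    c ∈ hospPart M Y h ↔ c ∈ Y ∧ M.xH c = h := by simp [hospPart]

lemma mem_allocs {Y Z : Finset X} :
    Z ∈ allocs M Y ↔ Z ⊆ Y ∧ ∀ x ∈ Z, ∀ y ∈ Z, M.xD x = M.xD y → x = y := by
  simp [allocs, Finset.mem_filter, Finset.mem_powerset]

lemma allocs_mono {Y Y' Z : Finset X} (hYY : Y ⊆ Y') (hZ : Z ∈ allocs M Y) :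
    Z ∈ allocs M Y' := by
  rw [mem_allocs] at *
  exact ⟨hZ.1.trans hYY, hZ.2⟩

lemma singleton_mem_allocs {Y : Finset X} {c : X} (hc : c ∈ Y) : {c} ∈ allocs M Y := by
  rw [mem_allocs]
  simp [Finset.singleton_subset_iff, hc]

lemma bestAlloc_mem (pr : Pref X) (Y : Finset X) : bestAlloc M pr Y ∈ allocs M Y :=
  @Finset.max'_mem _ pr _ _

lemma le_bestAlloc (pr : Pref X) {Y Z : Finset X} (h : Z ∈ allocs M Y) :
    pr.le Z (bestAlloc M pr Y) :=
  @Finset.le_max' _ pr _ _ h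

lemma bestAlloc_eq (pr : Pref X) {Y B : Finset X} (hB : B ∈ allocs M Y)
    (hmax : ∀ Z ∈ allocs M Y, pr.le Z B) : bestAlloc M pr Y = B :=
  pr.le_antisymm _ _ (hmax _ (bestAlloc_mem pr Y)) (le_bestAlloc pr hB)

end Test
section Test2
variable {D H X : Type*}
variable [DecidableEq D] [DecidableEq H] [DecidableEq X] [Fintype D] [Fintype H] [Fintype X]
variable {M : Market D H X}

lemma docPart_subset' (Y : Finset X) (d : D) : docPart M Y d ⊆ Y := Finset.filter_subset _ _
lemma hospPart_subset' (Y : Finset X) (h : H) : hospPart M Y h ⊆ Y := Finset.filter_subset _ _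

lemma Cd_mem_allocs (pr : Pref X) (d : D) (Y : Finset X) :
    Cd M pr d Y ∈ allocs M (docPart M Y d) := bestAlloc_mem _ _

lemma Cd_subset_docPart (pr : Pref X) (d : D) (Y : Finset X) :
    Cd M pr d Y ⊆ docPart M Y d := (mem_allocs.mp (Cd_mem_allocs pr d Y)).1

lemma xD_of_mem_Cd {pr : Pref X} {d : D} {Y : Finset X} {c : X} (hc : c ∈ Cd M pr d Y) :
    M.xD c = d ∧ c ∈ Y := by
  have := mem_docPart.mp (Cd_subset_docPart pr d Y hc)
  exact ⟨this.2, this.1⟩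

lemma Cd_eq_singleton_of_mem {pr : Pref X} {d : D} {Y : Finset X} {c : X}
    (hc : c ∈ Cd M pr d Y) : Cd M pr d Y = {c} := by
  have hall := (mem_allocs (M := M)).mp (Cd_mem_allocs pr d Y)
  ext a
  simp only [Finset.mem_singleton]
  constructor
  · intro ha
    exact hall.2 a ha c hc (by rw [(xD_of_mem_Cd ha).1, (xD_of_mem_Cd hc).1])
  · rintro rfl; exact hc

lemma Cd_cases (pr : Pref X) (d : D) (Y : Finset X) :
    Cd M pr d Y = ∅ ∨ ∃ c, Cd M pr d Y = {c} ∧ M.xD c = d ∧ c ∈ Y := by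
  rcases Finset.eq_empty_or_nonempty (Cd M pr d Y) with h | ⟨c, hc⟩
  · exact Or.inl h
  · exact Or.inr ⟨c, Cd_eq_singleton_of_mem hc, (xD_of_mem_Cd hc).1, (xD_of_mem_Cd hc).2⟩

lemma empty_le_Cd (pr : Pref X) (d : D) (Y : Finset X) : pr.le ∅ (Cd M pr d Y) :=
  le_bestAlloc pr (empty_mem_allocs _ _)

lemma le_Cd_of_mem {pr : Pref X} {d : D} {Y : Finset X} {c : X} (hc : c ∈ Y)
    (hd : M.xD c = d) : pr.le {c} (Cd M pr d Y) :=
  le_bestAlloc pr (singleton_mem_allocs (mem_docPart.mpr ⟨hc, hd⟩))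

lemma docPart_mono {Y Y' : Finset X} (d : D) (h : Y ⊆ Y') :
    docPart M Y d ⊆ docPart M Y' d := Finset.filter_subset_filter _ h

lemma Cd_persist {pr : Pref X} {d : D} {Y' Y : Finset X} {c : X} (hsub : Y' ⊆ Y)
    (hc : c ∈ Cd M pr d Y) (hc' : c ∈ Y') : Cd M pr d Y' = {c} := by
  obtain ⟨hxd, -⟩ := xD_of_mem_Cd hc
  have h1 : Cd M pr d Y = {c} := Cd_eq_singleton_of_mem hc
  apply pr.le_antisymm
  · have h2 : Cd M pr d Y' ∈ allocs M (docPart M Y d) :=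
      allocs_mono (docPart_mono d hsub) (Cd_mem_allocs pr d Y')
    have h3 := le_bestAlloc pr h2
    rwa [show bestAlloc M pr (docPart M Y d) = {c} from h1] at h3
  · exact le_Cd_of_mem hc' hxd

-- Ch lemmas
lemma Ch_subset_hospPart (h : H) (Y : Finset X) : Ch M h Y ⊆ hospPart M Y h :=
  (mem_allocs.mp (bestAlloc_mem _ _)).1

lemma xH_of_mem_Ch {h : H} {Y : Finset X} {c : X} (hc : c ∈ Ch M h Y) :
    M.xH c = h ∧ c ∈ Y := by
  have := mem_hospPart.mp (Ch_subset_hospPart h Y hc)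
  exact ⟨this.2, this.1⟩

lemma Ch_congr {h : H} {Y Y' : Finset X} (hYY : hospPart M Y h = hospPart M Y' h) :
    Ch M h Y = Ch M h Y' := by unfold Ch; rw [hYY]

lemma mem_CH {Y : Finset X} {c : X} : c ∈ CH M Y ↔ c ∈ Ch M (M.xH c) Y := by
  constructor
  · intro hc
    obtain ⟨h', -, hc'⟩ := Finset.mem_biUnion.mp hc
    rwa [(xH_of_mem_Ch hc').1]
  · intro hc
    exact Finset.mem_biUnion.mpr ⟨M.xH c, Finset.mem_univ _, hc⟩

lemma CH_subset (Y : Finset X) : CH M Y ⊆ Y := fun c hc =>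
  (xH_of_mem_Ch (mem_CH.mp hc)).2

lemma mem_CD_iff {P : Profile D X} {Y : Finset X} {c : X} :
    c ∈ CD M P Y ↔ c ∈ Cd M (P (M.xD c)) (M.xD c) Y := by
  constructor
  · intro hc
    obtain ⟨d', -, hc'⟩ := Finset.mem_biUnion.mp hc
    rwa [(xD_of_mem_Cd hc').1]
  · intro hc
    exact Finset.mem_biUnion.mpr ⟨M.xD c, Finset.mem_univ _, hc⟩

lemma CD_subset (P : Profile D X) (Y : Finset X) : CD M P Y ⊆ Y := fun c hc =>
  (xD_of_mem_Cd (mem_CD_iff.mp hc)).2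

lemma docPart_CD (P : Profile D X) (Y : Finset X) (d : D) :
    docPart M (CD M P Y) d = Cd M (P d) d Y := by
  ext c
  rw [mem_docPart, mem_CD_iff]
  constructor
  · rintro ⟨hc, hxd⟩; rwa [hxd] at hc
  · intro hc
    have := (xD_of_mem_Cd hc).1
    exact ⟨by rwa [this], this⟩

lemma hospPart_CH (Y : Finset X) (h : H) : hospPart M (CH M Y) h = Ch M h Y := by
  ext c
  rw [mem_hospPart, mem_CH]
  constructor
  · rintro ⟨hc, hxh⟩; rwa [hxh] at hc
  · intro hc
    have := (xH_of_mem_Ch hc).1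
    exact ⟨by rwa [this], this⟩

lemma bestAlloc_of_Ch (h : H) (Y : Finset X) :
    bestAlloc M (M.prH h) (Ch M h Y) = Ch M h Y := by
  apply bestAlloc_eq
  · rw [mem_allocs]
    exact ⟨Finset.Subset.refl _, (mem_allocs.mp (bestAlloc_mem (M.prH h) (hospPart M Y h))).2⟩
  · intro Z hZ
    exact le_bestAlloc _ (allocs_mono (Ch_subset_hospPart h Y) hZ)

lemma Ch_of_hospPart_eq {W Y : Finset X} {h : H} (hW : hospPart M W h = Ch M h Y) :
    Ch M h W = Ch M h Y := by
  show bestAlloc M (M.prH h) (hospPart M W h) = _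
  rw [hW, bestAlloc_of_Ch]

lemma biUnion_hospPart (Y : Finset X) :
    (Finset.univ.biUnion fun h => hospPart M Y h) = Y := by
  ext c
  simp only [Finset.mem_biUnion, Finset.mem_univ, true_and, mem_hospPart]
  exact ⟨fun ⟨h, hc, _⟩ => hc, fun hc => ⟨M.xH c, hc, rfl⟩⟩

lemma CH_eq_of_parts {Y : Finset X}
    (hp : ∀ h, bestAlloc M (M.prH h) (hospPart M Y h) = hospPart M Y h) :
    CH M Y = Y := by
  have : ∀ h, Ch M h Y = hospPart M Y h := fun h => hp h
  calc CH M Y = Finset.univ.biUnion (fun h => hospPart M Y h) := by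
        unfold CH; exact Finset.biUnion_congr rfl (fun h _ => this h)
    _ = Y := biUnion_hospPart Y

end Test2
section Test3
variable {D H X : Type*}
variable [DecidableEq D] [DecidableEq H] [DecidableEq X] [Fintype D] [Fintype H] [Fintype X]
variable {M : Market D H X} {P : Profile D X}

lemma DDAsets_succ (t : ℕ) :
    DDAsets M P (t + 1) = DDAsets M P t \ (offers M P t \ CH M (offers M P t)) := rfl

lemma DDAsets_succ_subset (t : ℕ) : DDAsets M P (t + 1) ⊆ DDAsets M P t := by
  rw [DDAsets_succ]; exact Finset.sdiff_subset

lemma DDAsets_mono {s t : ℕ} (hst : s ≤ t) : DDAsets M P t ⊆ DDAsets M P s := by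
  induction t with
  | zero => simp_all
  | succ n ih =>
      rcases Nat.lt_or_ge s (n+1) with h | h
      · exact (DDAsets_succ_subset n).trans (ih (Nat.lt_succ_iff.mp h))
      · have : s = n + 1 := le_antisymm hst h
        subst this; exact Finset.Subset.refl _

lemma offers_subset (t : ℕ) : offers M P t ⊆ DDAsets M P t := CD_subset _ _

lemma mem_offers_iff {t : ℕ} {c : X} :
    c ∈ offers M P t ↔ c ∈ Cd M (P (M.xD c)) (M.xD c) (DDAsets M P t) := mem_CD_iff

lemma stopped_succ_sets {t : ℕ} (h : DDAstopped M P t) :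
    DDAsets M P (t + 1) = DDAsets M P t := by
  rw [DDAsets_succ]
  have : offers M P t \ CH M (offers M P t) = ∅ := by
    rw [h]; exact Finset.sdiff_self _
  rw [this, Finset.sdiff_empty]

lemma stopped_mono {s t : ℕ} (h : DDAstopped M P t) (hst : t ≤ s) :
    DDAstopped M P s ∧ DDAsets M P s = DDAsets M P t := by
  induction s with
  | zero => cases Nat.le_zero.mp hst; exact ⟨h, rfl⟩
  | succ n ih =>
      rcases Nat.lt_or_ge t (n+1) with h' | h'
      · obtain ⟨h1, h2⟩ := ih (Nat.lt_succ_iff.mp h')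
        have h3 : DDAsets M P (n+1) = DDAsets M P n := stopped_succ_sets h1
        refine ⟨?_, h3.trans h2⟩
        unfold DDAstopped offers
        rw [h3]; exact h1
      · have : t = n + 1 := le_antisymm hst h'
        subst this; exact ⟨h, rfl⟩

lemma stopped_of_sets_eq {t : ℕ} (h : DDAsets M P (t+1) = DDAsets M P t) :
    DDAstopped M P t := by
  have h1 : offers M P t \ CH M (offers M P t) = ∅ := by
    by_contra hne
    obtain ⟨c, hc⟩ := Finset.nonempty_iff_ne_empty.mpr hne
    have hc1 : c ∈ DDAsets M P t := offers_subset t (Finset.mem_sdiff.mp hc).1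
    have hc2 : c ∉ DDAsets M P (t+1) := by
      rw [DDAsets_succ]; simp [Finset.mem_sdiff, hc1, hc]
    exact hc2 (h ▸ hc1)
  have h2 : offers M P t ⊆ CH M (offers M P t) := by
    intro c hc
    by_contra hcn
    exact Finset.notMem_empty c (h1 ▸ Finset.mem_sdiff.mpr ⟨hc, hcn⟩)
  exact Finset.Subset.antisymm (CH_subset _) h2

lemma stopped_cardX : DDAstopped M P (Fintype.card X) := by
  by_cases hex : ∃ k, k < Fintype.card X ∧ DDAstopped M P k
  · obtain ⟨k, hk, hst⟩ := hex
    exact (stopped_mono hst hk.le).1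
  · push_neg at hex
    have key : ∀ n, n ≤ Fintype.card X → (∀ k, k < n → ¬ DDAstopped M P k) →
        (DDAsets M P n).card + n ≤ Fintype.card X := by
      intro n
      induction n with
      | zero => intro _ _; simpa using Finset.card_le_univ _
      | succ m ih =>
          intro hm hall
          have h1 := ih (Nat.le_of_succ_le hm) (fun k hk => hall k (hk.trans (Nat.lt_succ_self m)))
          have hss : DDAsets M P (m+1) ⊂ DDAsets M P m := by
            refine Finset.ssubset_iff_subset_ne.mpr ⟨DDAsets_succ_subset m, ?_⟩
            intro heq
            exact hall m (Nat.lt_succ_self m) (stopped_of_sets_eq heq)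
          have := Finset.card_lt_card hss
          omega
    have h0 := key (Fintype.card X) le_rfl (fun k hk => hex k hk)
    have hempty : DDAsets M P (Fintype.card X) = ∅ := by
      have : (DDAsets M P (Fintype.card X)).card = 0 := by omega
      exact Finset.card_eq_zero.mp this
    have hoff : offers M P (Fintype.card X) = ∅ := by
      have := offers_subset (M := M) (P := P) (Fintype.card X)
      rw [hempty] at this
      exact Finset.subset_empty.mp this
    unfold DDAstopped
    rw [hoff]
    exact Finset.subset_empty.mp (CH_subset (∅ : Finset X))

lemma DDAoutput_eq_offers : DDAoutput M P = offers M P (Fintype.card X) := stopped_cardX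

lemma docOpt_eq_Cd (d : D) :
    docOpt M P d = Cd M (P d) d (DDAsets M P (Fintype.card X)) := by
  unfold docOpt
  rw [DDAoutput_eq_offers]
  exact docPart_CD P _ d

lemma rejected_of_not_mem {t : ℕ} {c : X} (hc : c ∉ DDAsets M P t) :
    ∃ k, k < t ∧ c ∈ offers M P k ∧ c ∉ CH M (offers M P k) := by
  induction t with
  | zero => exact absurd (Finset.mem_univ c) hc
  | succ n ih =>
      by_cases h : c ∈ DDAsets M P n
      · have : c ∈ offers M P n \ CH M (offers M P n) := by
          by_contra hcn
          exact hc (by rw [DDAsets_succ]; exact Finset.mem_sdiff.mpr ⟨h, hcn⟩)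
        obtain ⟨h1, h2⟩ := Finset.mem_sdiff.mp this
        exact ⟨n, Nat.lt_succ_self n, h1, h2⟩
      · obtain ⟨k, hk, h1, h2⟩ := ih h
        exact ⟨k, hk.trans (Nat.lt_succ_self n), h1, h2⟩

lemma offers_persist {s t : ℕ} {c : X} (hst : s ≤ t) (hc : c ∈ offers M P s)
    (hc' : c ∈ DDAsets M P t) : c ∈ offers M P t := by
  rw [mem_offers_iff] at hc ⊢
  have := Cd_persist (DDAsets_mono hst) hc hc'
  rw [this]
  exact Finset.mem_singleton_self c

lemma mem_accOffers {t : ℕ} {c : X} :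
    c ∈ accOffers M P t ↔ ∃ k, k ≤ t ∧ c ∈ offers M P k := by
  simp [accOffers, Finset.mem_biUnion, Nat.lt_succ_iff]

lemma offers_subset_accOffers {k t : ℕ} (hkt : k ≤ t) : offers M P k ⊆ accOffers M P t :=
  fun c hc => mem_accOffers.mpr ⟨k, hkt, hc⟩

lemma accOffers_mono {s t : ℕ} (hst : s ≤ t) : accOffers M P s ⊆ accOffers M P t := by
  intro c hc
  obtain ⟨k, hk, hc⟩ := mem_accOffers.mp hc
  exact mem_accOffers.mpr ⟨k, hk.trans hst, hc⟩

end Test3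
section Test4
variable {D H X : Type*}
variable [DecidableEq D] [DecidableEq H] [DecidableEq X] [Fintype D] [Fintype H] [Fintype X]
variable {M : Market D H X} {P : Profile D X}

lemma hospPart_mono {Y Y' : Finset X} (h : H) (hYY : Y ⊆ Y') :
    hospPart M Y h ⊆ hospPart M Y' h := Finset.filter_subset_filter _ hYY

/-- Cumulative-offers lemma + once-rejected-stays-rejected, by joint induction. -/
lemma cum_main (hsub : ∀ h : H, Substitutable M h) :
    ∀ t : ℕ, (∀ h : H, Ch M h (accOffers M P t) = Ch M h (offers M P t)) ∧
      (∀ k, k ≤ t → ∀ c : X, c ∈ offers M P k → c ∉ CH M (offers M P k) →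
        c ∉ Ch M (M.xH c) (accOffers M P t)) := by
  have hacc0 : accOffers M P 0 = offers M P 0 := by
    ext c; rw [mem_accOffers]
    exact ⟨fun ⟨k, hk, hc⟩ => by rwa [Nat.le_zero.mp hk] at hc, fun hc => ⟨0, le_rfl, hc⟩⟩
  intro t
  induction t with
  | zero =>
      constructor
      · intro h; rw [hacc0]
      · intro k hk c hc hcn
        rw [Nat.le_zero.mp hk] at hc hcn
        rw [hacc0]
        intro hmem
        exact hcn (mem_CH.mpr hmem)
  | succ n ih =>
      -- step for rejected: from not-in Ch(acc n) to not-in Ch(acc (n+1))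
      have hstep : ∀ c : X, c ∈ accOffers M P n →
          c ∉ Ch M (M.xH c) (accOffers M P n) → c ∉ Ch M (M.xH c) (accOffers M P (n+1)) := by
        intro c hc hcn hmem
        exact hcn (hsub (M.xH c) (accOffers M P (n+1)) (accOffers M P n)
          (hospPart_mono _ (accOffers_mono (Nat.le_succ n))) c
          (mem_hospPart.mpr ⟨hc, rfl⟩) hmem)
      have hrejn : ∀ k, k ≤ n → ∀ c : X, c ∈ offers M P k → c ∉ CH M (offers M P k) →
          c ∉ Ch M (M.xH c) (accOffers M P (n+1)) := by
        intro k hk c hc hcn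
        exact hstep c (offers_subset_accOffers hk hc) (ih.2 k hk c hc hcn)
      have hpart1 : ∀ h : H, Ch M h (accOffers M P (n+1)) = Ch M h (offers M P (n+1)) := by
        intro h
        have hsubacc : offers M P (n+1) ⊆ accOffers M P (n+1) := offers_subset_accOffers le_rfl
        -- every element of the choice from cumulative is a current offer
        have hchsub : Ch M h (accOffers M P (n+1)) ⊆ offers M P (n+1) := by
          intro c hc
          obtain ⟨hxc, hcacc⟩ := xH_of_mem_Ch hc
          by_contra hcn
          obtain ⟨k, hk, hck⟩ := mem_accOffers.mp hcacc
          have hk' : k ≤ n := by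
            rcases Nat.lt_or_ge k (n+1) with h' | h'
            · exact Nat.lt_succ_iff.mp h'
            · exact absurd (by rwa [le_antisymm hk h'] at hck) hcn
          -- c is not in the current sets, else it would persist as an offer
          have hcnot : c ∉ DDAsets M P (n+1) := by
            intro hmem
            exact hcn (offers_persist (Nat.le_succ_of_le hk') hck hmem)
          obtain ⟨j, hj, hj1, hj2⟩ := rejected_of_not_mem hcnot
          have h9 := hrejn j (Nat.lt_succ_iff.mp hj) c hj1 hj2
          rw [hxc] at h9
          exact h9 hc
        apply (M.prH h).le_antisymm
        · -- Ch acc ≤ Ch offers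
          have h1 : Ch M h (accOffers M P (n+1)) ∈ allocs M (hospPart M (offers M P (n+1)) h) := by
            rw [mem_allocs]
            constructor
            · intro c hc
              exact mem_hospPart.mpr ⟨hchsub hc, (xH_of_mem_Ch hc).1⟩
            · exact (mem_allocs.mp (bestAlloc_mem (M.prH h) (hospPart M (accOffers M P (n+1)) h))).2
          exact le_bestAlloc _ h1
        · have h2 : Ch M h (offers M P (n+1)) ∈ allocs M (hospPart M (accOffers M P (n+1)) h) :=
            allocs_mono (hospPart_mono h hsubacc) (bestAlloc_mem _ _)
          exact le_bestAlloc _ h2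
      refine ⟨hpart1, ?_⟩
      intro k hk c hc hcn
      rcases Nat.lt_or_ge k (n+1) with h' | h'
      · exact hrejn k (Nat.lt_succ_iff.mp h') c hc hcn
      · have : k = n + 1 := le_antisymm hk h'
        subst this
        rw [hpart1 (M.xH c)]
        intro hmem
        exact hcn (mem_CH.mpr hmem)

lemma Ch_accOffers (hsub : ∀ h : H, Substitutable M h) (t : ℕ) (h : H) :
    Ch M h (accOffers M P t) = Ch M h (offers M P t) := (cum_main hsub t).1 h

end Test4
section Test5
variable {D H X : Type*}
variable [DecidableEq D] [DecidableEq H] [DecidableEq X] [Fintype D] [Fintype H] [Fintype X]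
variable {M : Market D H X}

noncomputable def encFS (A : Finset X) : ℕ := (Fintype.equivFin (Finset X) A : ℕ)

lemma encFS_lt (A : Finset X) : encFS A < Fintype.card (Finset X) :=
  (Fintype.equivFin (Finset X) A).isLt

lemma encFS_inj : Function.Injective (encFS (X := X)) := fun a b h =>
  (Fintype.equivFin (Finset X)).injective (Fin.ext h)

noncomputable def rankF (S A : Finset X) : ℕ := if A = S then 2 else if A = ∅ then 1 else 0

noncomputable def keyF (S A : Finset X) : ℕ := rankF S A * Fintype.card (Finset X) + encFS A

lemma keyF_lt_of_rank_lt {S A B : Finset X} (h : rankF S A < rankF S B) :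
    keyF S A < keyF S B := by
  unfold keyF
  have h1 : rankF S A * Fintype.card (Finset X) + encFS A <
      (rankF S A + 1) * Fintype.card (Finset X) := by
    have := encFS_lt (X := X) A
    rw [add_mul, one_mul]
    omega
  have h2 : (rankF S A + 1) * Fintype.card (Finset X) ≤
      rankF S B * Fintype.card (Finset X) := Nat.mul_le_mul_right _ (by omega)
  omega

lemma keyF_inj (S : Finset X) : Function.Injective (keyF S) := by
  intro a b hab
  rcases lt_trichotomy (rankF S a) (rankF S b) with h | h | h
  · exact absurd hab (Nat.ne_of_lt (keyF_lt_of_rank_lt h))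
  · apply encFS_inj
    unfold keyF at hab
    rw [h] at hab
    omega
  · exact absurd hab.symm (Nat.ne_of_lt (keyF_lt_of_rank_lt h))

noncomputable def topPref (S : Finset X) : Pref X := LinearOrder.lift' (keyF S) (keyF_inj S)

lemma topPref_le_iff {S A B : Finset X} : (topPref S).le A B ↔ keyF S A ≤ keyF S B := Iff.rfl

lemma bestAlloc_topPref_self {S W : Finset X} (hS : S ∈ allocs M W) :
    bestAlloc M (topPref S) W = S := by
  apply bestAlloc_eq
  · exact hS
  · intro Z hZ
    rw [topPref_le_iff]
    rcases eq_or_ne Z S with h | h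
    · subst h; exact le_rfl
    · apply le_of_lt
      apply keyF_lt_of_rank_lt
      unfold rankF
      rw [if_neg h, if_pos rfl]
      split <;> omega

lemma bestAlloc_topPref_not_mem {c : X} {W : Finset X} (hc : {c} ∉ allocs M W) :
    bestAlloc M (topPref {c}) W = ∅ := by
  apply bestAlloc_eq
  · exact empty_mem_allocs M W
  · intro Z hZ
    rw [topPref_le_iff]
    have hZc : Z ≠ {c} := fun h => hc (h ▸ hZ)
    rcases eq_or_ne Z (∅ : Finset X) with h | h
    · subst h; exact le_rfl
    · apply le_of_lt
      apply keyF_lt_of_rank_lt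
      unfold rankF
      rw [if_neg hZc, if_neg h, if_neg (Finset.singleton_ne_empty c).symm, if_pos rfl]
      omega

lemma worstIn_mem (pr : Pref X) {S : Set (Finset X)} (h : S.Nonempty) : worstIn pr S ∈ S := by
  unfold worstIn
  rw [dif_pos h]
  have := @Finset.min'_mem _ pr (Set.toFinite S).toFinset
    ((Set.Finite.toFinset_nonempty _).mpr h)
  rwa [Set.Finite.mem_toFinset] at this

lemma worstIn_le (pr : Pref X) {S : Set (Finset X)} {z : Finset X} (hz : z ∈ S) :
    pr.le (worstIn pr S) z := by
  have h : S.Nonempty := ⟨z, hz⟩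
  unfold worstIn
  rw [dif_pos h]
  exact @Finset.min'_le _ pr _ z ((Set.Finite.mem_toFinset _).mpr hz)

end Test5
section Test6
variable {D H X : Type*}
variable [DecidableEq D] [DecidableEq H] [DecidableEq X] [Fintype D] [Fintype H] [Fintype X]

lemma key_lemma (M : Market D H X) (hsub : ∀ h : H, Substitutable M h)
    (d : D) (Pd : Pref X) (y : X) (P0 : Profile D X) (hP0 : P0 d = Pd)
    (hout : docOpt M P0 d = {y}) (x : X) (hxd : M.xD x = d)
    (hxy : Pd.lt ({y} : Finset X) {x})
    (hxmin : ∀ w : X, M.xD w = d → Pd.lt ({y} : Finset X) {w} →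
      Pd.le ({x} : Finset X) {w})
    (Q : Pref X) :
    ∃ P : Profile D X, P d = Q ∧ Pd.le (docOpt M P d) ({y} : Finset X) := by
  classical
  set N := Fintype.card X with hN
  -- witness-run facts
  have hCdN : Cd M Pd d (DDAsets M P0 N) = {y} := by
    have h1 := docOpt_eq_Cd (M := M) (P := P0) d
    rw [hP0] at h1
    exact h1.symm.trans hout
  have hey : Pd.le (∅ : Finset X) ({y} : Finset X) := by
    have := empty_le_Cd (M := M) Pd d (DDAsets M P0 N)
    rwa [hCdN] at this
  have hnot : ∀ (t : ℕ) (z w : X), Cd M Pd d (DDAsets M P0 t) = {z} →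
      Pd.lt ({z} : Finset X) {w} → M.xD w = d → w ∉ DDAsets M P0 t := by
    intro t z w hz hlt hw hmem
    have h1 := le_Cd_of_mem (M := M) (pr := Pd) hmem hw
    rw [hz] at h1
    exact pref_not_le_of_lt Pd hlt h1
  have hxnot : x ∉ DDAsets M P0 N := hnot N y x hCdN hxy hxd
  obtain ⟨tx, htx, hxo, hxr⟩ := rejected_of_not_mem hxnot
  have hCdtx : Cd M Pd d (DDAsets M P0 tx) = {x} := by
    have h1 := mem_offers_iff.mp hxo
    rw [hxd, hP0] at h1
    exact Cd_eq_singleton_of_mem h1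
  have hgoodacc : ∀ w : X, M.xD w = d → Pd.lt ({y} : Finset X) {w} →
      w ∈ accOffers M P0 tx := by
    intro w hw hlt
    rcases eq_or_ne w x with rfl | hne
    · exact offers_subset_accOffers le_rfl hxo
    · have hltx : Pd.lt ({x} : Finset X) {w} :=
        pref_lt_of_le_of_ne Pd (hxmin w hw hlt)
          (by intro hh; exact hne (Finset.singleton_inj.mp hh).symm)
      have hwnot : w ∉ DDAsets M P0 tx := hnot tx x w hCdtx hltx hw
      obtain ⟨k, hk, h1, -⟩ := rejected_of_not_mem hwnot
      exact offers_subset_accOffers hk.le h1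
  -- the adversarial field V
  set V := CH M (offers M P0 tx) with hVdef
  have hVpart : ∀ h : H, hospPart M V h = Ch M h (offers M P0 tx) := fun h =>
    hospPart_CH _ h
  have hVsub : V ⊆ offers M P0 tx := CH_subset _
  have hVd : ∀ c ∈ V, M.xD c ≠ d := by
    intro c hc hcd
    have hco : c ∈ offers M P0 tx := hVsub hc
    have h1 := mem_offers_iff.mp hco
    rw [hcd, hP0] at h1
    have h2 := Cd_eq_singleton_of_mem h1
    rw [hCdtx] at h2
    have : c = x := (Finset.singleton_inj.mp h2.symm)
    subst this
    exact hxr hc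
  have hbest : ∀ (h : H) (W Y : Finset X), hospPart M W h = Ch M h Y →
      bestAlloc M (M.prH h) (hospPart M W h) = hospPart M W h := by
    intro h W Y hWY; rw [hWY]; exact bestAlloc_of_Ch h Y
  -- the key rejection property of V
  have hW7 : ∀ w : X, M.xD w = d → Pd.lt ({y} : Finset X) {w} →
      w ∉ Ch M (M.xH w) (insert w V) := by
    intro w hw hlt hmem
    have hwacc : w ∈ accOffers M P0 tx := hgoodacc w hw hlt
    set h := M.xH w with hh
    have hsubpart : hospPart M (insert w V) h ⊆ hospPart M (accOffers M P0 tx) h := by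
      intro c hc
      obtain ⟨hc1, hc2⟩ := mem_hospPart.mp hc
      rcases Finset.mem_insert.mp hc1 with rfl | hcV
      · exact mem_hospPart.mpr ⟨hwacc, hc2⟩
      · exact mem_hospPart.mpr ⟨offers_subset_accOffers le_rfl (hVsub hcV), hc2⟩
    have hA : Ch M h (insert w V) ∈ allocs M (hospPart M (accOffers M P0 tx) h) := by
      rw [mem_allocs]
      exact ⟨(Ch_subset_hospPart h _).trans hsubpart,
        (mem_allocs.mp (bestAlloc_mem (M.prH h) (hospPart M (insert w V) h))).2⟩
    have h1 : (M.prH h).le (Ch M h (insert w V)) (Ch M h (offers M P0 tx)) := by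
      have h2 := le_bestAlloc (M.prH h) hA
      rwa [show bestAlloc M (M.prH h) (hospPart M (accOffers M P0 tx) h) =
        Ch M h (offers M P0 tx) from Ch_accOffers hsub tx h] at h2
    have h2 : (M.prH h).le (Ch M h (offers M P0 tx)) (Ch M h (insert w V)) := by
      apply le_bestAlloc
      rw [mem_allocs]
      constructor
      · intro c hc
        have hc' : c ∈ hospPart M V h := (hVpart h) ▸ hc
        obtain ⟨hc1, hc2⟩ := mem_hospPart.mp hc'
        exact mem_hospPart.mpr ⟨Finset.mem_insert_of_mem hc1, hc2⟩
      · exact (mem_allocs.mp (bestAlloc_mem (M.prH h) (hospPart M (offers M P0 tx) h))).2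
    have hAB : Ch M h (insert w V) = Ch M h (offers M P0 tx) :=
      (M.prH h).le_antisymm _ _ h1 h2
    rw [hAB, ← hVpart h] at hmem
    exact hVd w (mem_hospPart.mp hmem).1 hw
  -- adversarial profile
  set Padv : Profile D X := fun d' => if d' = d then Q else topPref (docPart M V d')
    with hPadvdef
  have hPadv : Padv d = Q := by rw [hPadvdef]; simp
  have hVcases : ∀ d' : D, docPart M V d' = ∅ ∨
      ∃ c, docPart M V d' = {c} ∧ M.xD c = d' ∧ c ∈ V := by
    intro d'
    have hsubd : docPart M V d' ⊆ Cd M (P0 d') d' (DDAsets M P0 tx) := by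
      rw [← docPart_CD P0 (DDAsets M P0 tx) d']
      exact docPart_mono d' hVsub
    rcases Finset.eq_empty_or_nonempty (docPart M V d') with h | ⟨c, hc⟩
    · exact Or.inl h
    · right
      refine ⟨c, ?_, (mem_docPart.mp hc).2, (mem_docPart.mp hc).1⟩
      apply Finset.Subset.antisymm
      · rw [Cd_eq_singleton_of_mem (hsubd hc)] at hsubd
        exact hsubd
      · simpa using hc
  -- offers formula for the adversarial run
  have hofr : ∀ t : ℕ, offers M Padv t =
      (V ∩ DDAsets M Padv t) ∪ Cd M Q d (DDAsets M Padv t) := by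
    intro t
    ext c
    rw [mem_offers_iff]
    by_cases hcd : M.xD c = d
    · rw [hcd, hPadv]
      constructor
      · intro hc; exact Finset.mem_union_right _ hc
      · intro hc
        rcases Finset.mem_union.mp hc with hc | hc
        · exact absurd hcd (hVd c (Finset.mem_inter.mp hc).1)
        · exact hc
    · have hPd' : Padv (M.xD c) = topPref (docPart M V (M.xD c)) := by
        rw [hPadvdef]; simp [hcd]
      rw [hPd']
      rcases hVcases (M.xD c) with h0 | ⟨c0, hc0, hc0d, hc0V⟩
      · rw [h0]
        constructor
        · intro hc
          rw [show Cd M (topPref ∅) (M.xD c) (DDAsets M Padv t) = ∅ from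
            bestAlloc_topPref_self (empty_mem_allocs _ _)] at hc
          exact absurd hc (Finset.notMem_empty c)
        · intro hc
          exfalso
          rcases Finset.mem_union.mp hc with hc | hc
          · have h1 : c ∈ docPart M V (M.xD c) :=
              mem_docPart.mpr ⟨(Finset.mem_inter.mp hc).1, rfl⟩
            rw [h0] at h1
            exact Finset.notMem_empty c h1
          · exact hcd (xD_of_mem_Cd hc).1
      · rw [hc0]
        by_cases hmem : c0 ∈ DDAsets M Padv t
        · rw [show Cd M (topPref {c0}) (M.xD c) (DDAsets M Padv t) = {c0} from
            bestAlloc_topPref_self (singleton_mem_allocs (mem_docPart.mpr ⟨hmem, hc0d⟩))]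
          constructor
          · intro hc
            rw [Finset.mem_singleton] at hc
            subst hc
            exact Finset.mem_union_left _ (Finset.mem_inter.mpr ⟨hc0V, hmem⟩)
          · intro hc
            rcases Finset.mem_union.mp hc with hc | hc
            · have h1 : c ∈ docPart M V (M.xD c) :=
                mem_docPart.mpr ⟨(Finset.mem_inter.mp hc).1, rfl⟩
              rw [hc0] at h1
              exact h1
            · exact absurd (xD_of_mem_Cd hc).1 hcd
        · rw [show Cd M (topPref {c0}) (M.xD c) (DDAsets M Padv t) = ∅ from
            bestAlloc_topPref_not_mem (fun hcon => hmem (docPart_subset' _ _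
              ((mem_allocs.mp hcon).1 (Finset.mem_singleton_self c0))))]
          constructor
          · intro hc; exact absurd hc (Finset.notMem_empty c)
          · intro hc
            exfalso
            rcases Finset.mem_union.mp hc with hc | hc
            · obtain ⟨hcV, hcX⟩ := Finset.mem_inter.mp hc
              have h1 : c ∈ docPart M V (M.xD c) := mem_docPart.mpr ⟨hcV, rfl⟩
              rw [hc0, Finset.mem_singleton] at h1
              subst h1
              exact hmem hcX
            · exact hcd (xD_of_mem_Cd hc).1
  -- Invariant for the adversarial run
  have hInv : ∀ t : ℕ, (∀ c : X, M.xD c ≠ d → c ∈ DDAsets M Padv t) ∨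
      (DDAstopped M Padv t ∧ Pd.le (docPart M (offers M Padv t) d) ({y} : Finset X)) := by
    intro t
    induction t with
    | zero => exact Or.inl (fun c _ => Finset.mem_univ c)
    | succ n ih =>
        rcases ih with hA | hB
        · -- pre-acceptance state
          have hVX : V ∩ DDAsets M Padv n = V :=
            Finset.inter_eq_left.mpr (fun c hc => hA c (hVd c hc))
          have hO : offers M Padv n = V ∪ Cd M Q d (DDAsets M Padv n) := by
            rw [hofr n, hVX]
          rcases Cd_cases (M := M) Q d (DDAsets M Padv n) with hZ | ⟨w, hZ, hwd, hwX⟩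
          · -- d makes no offer: everything accepted
            have hOV : offers M Padv n = V := by rw [hO, hZ, Finset.union_empty]
            have hst : DDAstopped M Padv n := by
              show CH M (offers M Padv n) = offers M Padv n
              rw [hOV]
              exact CH_eq_of_parts (fun h => hbest h V (offers M P0 tx) (hVpart h))
            exact Or.inl (fun c hc => (stopped_succ_sets hst) ▸ hA c hc)
          · have hO' : offers M Padv n = insert w V := by
              rw [hO, hZ, Finset.union_comm, ← Finset.insert_eq]
            have hwV : w ∉ V := fun hc => hVd w hc hwd
            -- hospital parts of offers n
            have hpartne : ∀ h : H, h ≠ M.xH w →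
                hospPart M (offers M Padv n) h = Ch M h (offers M P0 tx) := by
              intro h hne
              rw [hO', ← hVpart h]
              ext c
              simp only [mem_hospPart, Finset.mem_insert]
              constructor
              · rintro ⟨rfl | hc, hch⟩
                · exact absurd hch.symm hne
                · exact ⟨hc, hch⟩
              · rintro ⟨hc, hch⟩; exact ⟨Or.inr hc, hch⟩
            have hpartw : hospPart M (offers M Padv n) (M.xH w) =
                insert w (hospPart M V (M.xH w)) := by
              rw [hO']
              ext c
              simp only [mem_hospPart, Finset.mem_insert]
              constructor
              · rintro ⟨rfl | hc, hch⟩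
                · exact Or.inl rfl
                · exact Or.inr ⟨hc, hch⟩
              · rintro (rfl | ⟨h1, h2⟩)
                · exact ⟨Or.inl rfl, rfl⟩
                · exact ⟨Or.inr h1, h2⟩
            have hVchosen : ∀ c ∈ V, M.xH c ≠ M.xH w →
                c ∈ Ch M (M.xH c) (offers M Padv n) := by
              intro c hc hch
              have h1 := Ch_of_hospPart_eq (M := M) (hpartne (M.xH c) hch)
              rw [h1, ← hVpart (M.xH c)]
              exact mem_hospPart.mpr ⟨hc, rfl⟩
            by_cases hacc : w ∈ Ch M (M.xH w) (offers M Padv n)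
            · -- w is accepted: the algorithm stops next round with outcome {w}
              right
              have hwy : Pd.le ({w} : Finset X) ({y} : Finset X) := by
                apply pref_le_of_not_lt
                intro hlt
                apply hW7 w hwd hlt
                rwa [show Ch M (M.xH w) (insert w V) = Ch M (M.xH w) (offers M Padv n)
                  from Ch_congr (by rw [hO'])]
              set Tw := Ch M (M.xH w) (offers M Padv n) with hTwdef
              have hTw_sub : Tw ⊆ insert w (hospPart M V (M.xH w)) := by
                intro c hc
                have := Ch_subset_hospPart (M.xH w) (offers M Padv n) hc
                rwa [hpartw] at this
              -- survival of contracts into round n+1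
              have hsurv : ∀ c : X, c ∈ DDAsets M Padv n → c ∈ CH M (offers M Padv n) →
                  c ∈ DDAsets M Padv (n+1) := by
                intro c h1 h2
                rw [DDAsets_succ]
                exact Finset.mem_sdiff.mpr ⟨h1, fun hc => (Finset.mem_sdiff.mp hc).2 h2⟩
              have hwin : w ∈ DDAsets M Padv (n+1) := hsurv w hwX (mem_CH.mpr hacc)
              have hVmem1 : ∀ c ∈ V, (M.xH c = M.xH w → c ∈ Tw) → c ∈ DDAsets M Padv (n+1) := by
                intro c hc hcond
                apply hsurv c (hA c (hVd c hc))
                apply mem_CH.mpr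
                by_cases hch : M.xH c = M.xH w
                · rw [hch]; exact hcond hch
                · exact hVchosen c hc hch
              have hVmem2 : ∀ c ∈ V, c ∈ DDAsets M Padv (n+1) → (M.xH c = M.xH w → c ∈ Tw) := by
                intro c hc hmem hch
                rw [DDAsets_succ] at hmem
                have h2 := (Finset.mem_sdiff.mp hmem).2
                have hcO : c ∈ offers M Padv n := by
                  rw [hO']; exact Finset.mem_insert_of_mem hc
                by_contra hcT
                apply h2
                apply Finset.mem_sdiff.mpr ⟨hcO, ?_⟩
                intro hcCH
                have := mem_CH.mp hcCH
                rw [hch] at this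
                exact hcT this
              -- V ∩ X^{n+1}
              set W' := V.filter (fun c => M.xH c = M.xH w → c ∈ Tw) with hW'def
              have hVX1 : V ∩ DDAsets M Padv (n+1) = W' := by
                ext c
                rw [Finset.mem_inter, hW'def, Finset.mem_filter]
                constructor
                · rintro ⟨h1, h2⟩; exact ⟨h1, hVmem2 c h1 h2⟩
                · rintro ⟨h1, h2⟩; exact ⟨h1, hVmem1 c h1 h2⟩
              have hCdw : Cd M Q d (DDAsets M Padv (n+1)) = {w} :=
                Cd_persist (DDAsets_succ_subset n) (by rw [hZ]; exact Finset.mem_singleton_self w) hwin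
              have hO1 : offers M Padv (n+1) = insert w W' := by
                rw [hofr (n+1), hVX1, hCdw, Finset.union_comm, ← Finset.insert_eq]
              -- parts of the new offer set
              have hW'ne : ∀ h : H, h ≠ M.xH w →
                  hospPart M (offers M Padv (n+1)) h = Ch M h (offers M P0 tx) := by
                intro h hne
                rw [hO1, ← hVpart h]
                ext c
                simp only [mem_hospPart, Finset.mem_insert, hW'def, Finset.mem_filter]
                constructor
                · rintro ⟨rfl | ⟨hc, -⟩, hch⟩
                  · exact absurd hch.symm hne
                  · exact ⟨hc, hch⟩
                · rintro ⟨hc, hch⟩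
                  refine ⟨Or.inr ⟨hc, fun hcw => absurd (hch.symm.trans hcw).symm hne.symm⟩, hch⟩
              have hW'w : hospPart M (offers M Padv (n+1)) (M.xH w) = Tw := by
                rw [hO1]
                ext c
                simp only [mem_hospPart, Finset.mem_insert, hW'def, Finset.mem_filter]
                constructor
                · rintro ⟨rfl | ⟨hc, hcT⟩, hch⟩
                  · exact hacc
                  · exact hcT hch
                · intro hcT
                  have hch : M.xH c = M.xH w := (xH_of_mem_Ch hcT).1
                  rcases Finset.mem_insert.mp (hTw_sub hcT) with rfl | hc
                  · exact ⟨Or.inl rfl, hch⟩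
                  · exact ⟨Or.inr ⟨(mem_hospPart.mp hc).1, fun _ => hcT⟩, hch⟩
              have hst1 : DDAstopped M Padv (n+1) := by
                show CH M (offers M Padv (n+1)) = offers M Padv (n+1)
                apply CH_eq_of_parts
                intro h
                by_cases hch : h = M.xH w
                · subst hch
                  exact hbest _ _ (offers M Padv n) hW'w
                · exact hbest _ _ (offers M P0 tx) (hW'ne h hch)
              refine ⟨hst1, ?_⟩
              have hdoc1 : docPart M (offers M Padv (n+1)) d = {w} := by
                have := docPart_CD (M := M) Padv (DDAsets M Padv (n+1)) d
                rw [hPadv] at this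
                rw [show offers M Padv (n+1) = CD M Padv (DDAsets M Padv (n+1)) from rfl,
                  this, hCdw]
              rw [hdoc1]
              exact hwy
            · -- w is rejected: only w is removed
              left
              intro c hcd
              have hcn : c ∈ DDAsets M Padv n := hA c hcd
              rw [DDAsets_succ]
              apply Finset.mem_sdiff.mpr ⟨hcn, ?_⟩
              intro hcrem
              obtain ⟨hcO, hcCH⟩ := Finset.mem_sdiff.mp hcrem
              apply hcCH
              apply mem_CH.mpr
              have hcV : c ∈ V := by
                rw [hO'] at hcO
                rcases Finset.mem_insert.mp hcO with rfl | hc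
                · exact absurd hwd hcd
                · exact hc
              by_cases hch : M.xH c = M.xH w
              · -- rejected w: the choice at xH w is exactly the V-part
                have hTreq : Ch M (M.xH w) (offers M Padv n) = hospPart M V (M.xH w) := by
                  apply (M.prH (M.xH w)).le_antisymm
                  · have h8 : Ch M (M.xH w) (offers M Padv n) ∈
                        allocs M (hospPart M V (M.xH w)) := by
                      rw [mem_allocs]
                      constructor
                      · intro a ha
                        have ha' := Ch_subset_hospPart (M.xH w) (offers M Padv n) ha
                        rw [hpartw] at ha'
                        rcases Finset.mem_insert.mp ha' with rfl | ha''
                        · exact absurd ha hacc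
                        · exact ha''
                      · exact (mem_allocs.mp (bestAlloc_mem (M.prH (M.xH w))
                          (hospPart M (offers M Padv n) (M.xH w)))).2
                    have h9 := le_bestAlloc (M.prH (M.xH w)) h8
                    rwa [hbest (M.xH w) V (offers M P0 tx) (hVpart (M.xH w))] at h9
                  · have h9 : hospPart M V (M.xH w) ∈
                        allocs M (hospPart M (offers M Padv n) (M.xH w)) := by
                      rw [mem_allocs]
                      constructor
                      · rw [hpartw]; exact fun a ha => Finset.mem_insert_of_mem ha
                      · rw [hVpart]
                        exact (mem_allocs.mp (bestAlloc_mem (M.prH (M.xH w))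
                          (hospPart M (offers M P0 tx) (M.xH w)))).2
                    have h10 := le_bestAlloc (M.prH (M.xH w)) h9
                    rwa [show bestAlloc M (M.prH (M.xH w)) (hospPart M (offers M Padv n) (M.xH w))
                      = Ch M (M.xH w) (offers M Padv n) from rfl] at h10
                rw [hch, hTreq]
                exact mem_hospPart.mpr ⟨hcV, hch⟩
              · exact hVchosen c hcV hch
        · -- already stopped
          have h3 : DDAsets M Padv (n+1) = DDAsets M Padv n := stopped_succ_sets hB.1
          right
          have hOeq : offers M Padv (n+1) = offers M Padv n := by
            unfold offers; rw [h3]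
          refine ⟨?_, ?_⟩
          · show CH M (offers M Padv (n+1)) = offers M Padv (n+1)
            rw [hOeq]; exact hB.1
          · rw [hOeq]; exact hB.2
  -- conclusion at round N
  refine ⟨Padv, hPadv, ?_⟩
  have hdoc : docOpt M Padv d = Cd M Q d (DDAsets M Padv N) := by
    have h1 := docOpt_eq_Cd (M := M) (P := Padv) d
    rwa [hPadv] at h1
  rcases hInv N with hA | hB
  · have hVX : V ∩ DDAsets M Padv N = V :=
      Finset.inter_eq_left.mpr (fun c hc => hA c (hVd c hc))
    have hO : offers M Padv N = V ∪ Cd M Q d (DDAsets M Padv N) := by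
      rw [hofr N, hVX]
    rcases Cd_cases (M := M) Q d (DDAsets M Padv N) with hZ | ⟨w, hZ, hwd, hwX⟩
    · rw [hdoc, hZ]; exact hey
    · have hO' : offers M Padv N = insert w V := by
        rw [hO, hZ, Finset.union_comm, ← Finset.insert_eq]
      have hstN : CH M (offers M Padv N) = offers M Padv N := stopped_cardX
      have hwO : w ∈ offers M Padv N := by
        rw [hO']; exact Finset.mem_insert_self w V
      have hwCH : w ∈ CH M (offers M Padv N) := by rw [hstN]; exact hwO
      have hacc : w ∈ Ch M (M.xH w) (insert w V) := by
        have h1 := mem_CH.mp hwCH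
        rwa [show Ch M (M.xH w) (offers M Padv N) = Ch M (M.xH w) (insert w V) from
          Ch_congr (by rw [hO'])] at h1
      have hwy := pref_le_of_not_lt Pd (fun hlt => hW7 w hwd hlt hacc)
      rw [hdoc, hZ]
      exact hwy
  · have h1 : docOpt M Padv d = docPart M (offers M Padv N) d := by
      unfold docOpt
      rw [DDAoutput_eq_offers]
    rw [h1]
    exact hB.2

end Test6

/-- Claim 1 in the proof of Theorem 1: let `y` be the contract with
`{y} = W_d(P_d, O^{φ̄}(P_d))`, assume `{w ∈ 𝐗_d : {w} P_d {y}}` is nonempty and let `x`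
be its `P_d`-minimum; then `{x} P_d W_d(P_d, O^{φ̄}(P'_d))` for every `P'_d ≠ P_d`. -/
theorem docOpt_claim1 (M : Market D H X) (hsub : ∀ h : H, Substitutable M h)
    (d : D) (Pd : Pref X) (y : X)
    (hy : worstIn Pd (optionSet (docOpt M) d Pd) = {y})
    (x : X) (hxd : M.xD x = d) (hxy : Pd.lt ({y} : Finset X) {x})
    (hxmin : ∀ w : X, M.xD w = d → Pd.lt ({y} : Finset X) {w} →
      Pd.le ({x} : Finset X) {w}) :
    ∀ P'd : Pref X, P'd ≠ Pd →
      Pd.lt (worstIn Pd (optionSet (docOpt M) d P'd)) ({x} : Finset X) := by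
  intro P'd _
  have hne : (optionSet (docOpt M) d Pd).Nonempty :=
    ⟨docOpt M (fun _ => Pd) d, ⟨fun _ => Pd, rfl, rfl⟩⟩
  have hymem : ({y} : Finset X) ∈ optionSet (docOpt M) d Pd := hy ▸ worstIn_mem Pd hne
  obtain ⟨P0, hP0, hy0⟩ := hymem
  obtain ⟨P, hPd, hle⟩ := key_lemma M hsub d Pd y P0 hP0 hy0.symm x hxd hxy hxmin P'd
  have hmemQ : docOpt M P d ∈ optionSet (docOpt M) d P'd := ⟨P, hPd, rfl⟩
  have h1 := worstIn_le Pd hmemQ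
  exact pref_lt_of_le_of_lt Pd (Pd.le_trans _ _ _ h1 hle) hxy

end Matching
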